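/- Let (A_1, A_2) and (B_1, B_2) be compatible basis pairs of a rank-r paving matroid M with A_1 ∩ A_2 = ∅. Then there exists a strictly monotone sequence of symmetric exchanges for (A_1, A_2) and (B_1, B_2) of length at least r − |A_1 ∩ B_1| − 2. -/

import Mathlib

open Set

/-- A symmetric exchange on an ordered pair of bases. -/
def SymExch {α : Type*} (M : Matroid α) (p p' : Set α × Set α) : Prop :=
  ∃ e ∈ p.1 \ p.2, ∃ f ∈ p.2 \ p.1,
    p'.1 = insert f (p.1 \ {e}) ∧ p'.2 = (insert e p.2) \ {f} ∧
    M.IsBase p'.1 ∧ M.IsBase p'.2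

namespace PavingAux

variable {α : Type*}

/-- In a paving matroid of rank `r`, for a base `X` and `x ∉ X`, at most one `a ∈ X`
can satisfy `x ∈ cl (X \ {a})`. -/
lemma key_unique (M : Matroid α) (hfin : M.E.Finite) (r : ℕ)
    (hpaving : ∀ I ⊆ M.E, I.ncard + 1 ≤ r → M.Indep I)
    {X : Set α} (hX : M.IsBase X) (hXr : X.ncard = r)
    {x a b : α} (hxE : x ∈ M.E) (hxX : x ∉ X) (ha : a ∈ X) (hb : b ∈ X) (hab : a ≠ b)
    (hax : x ∈ M.closure (X \ {a})) (hbx : x ∈ M.closure (X \ {b})) : False := by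
  have hXE := hX.subset_ground
  have hXfin : X.Finite := hfin.subset hXE
  have hYX : X \ {a, b} ⊆ X := diff_subset
  have hYE : X \ {a, b} ⊆ M.E := hYX.trans hXE
  have hYfin : (X \ {a, b}).Finite := hXfin.subset hYX
  have habX : ({a, b} : Set α) ⊆ X := by
    rw [pair_subset_iff]; exact ⟨ha, hb⟩
  have hr2 : 2 ≤ r := by
    have := ncard_le_ncard habX hXfin
    rwa [ncard_pair hab, hXr] at this
  have hYcard : (X \ {a, b}).ncard = r - 2 := by
    rw [ncard_diff habX (hXfin.subset habX), ncard_pair hab, hXr]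
  have hxY : x ∉ X \ {a, b} := fun h => hxX h.1
  have hins : M.Indep (insert x (X \ {a, b})) := by
    apply hpaving _ (insert_subset hxE hYE)
    rw [ncard_insert_of_notMem hxY hYfin, hYcard]
    omega
  have hYind : M.Indep (X \ {a, b}) := hins.subset (subset_insert _ _)
  have hxclY : x ∉ M.closure (X \ {a, b}) :=
    (hYind.notMem_closure_iff_of_notMem hxY hxE).2 hins
  have hXa : X \ {a} = insert b (X \ {a, b}) := by
    ext y
    simp only [mem_diff, mem_insert_iff, mem_singleton_iff, not_or]
    constructor
    · rintro ⟨hy, hya⟩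
      by_cases h : y = b
      · exact Or.inl h
      · exact Or.inr ⟨hy, hya, h⟩
    · rintro (rfl | ⟨hy, hya, -⟩)
      · exact ⟨hb, fun h => hab h.symm⟩
      · exact ⟨hy, hya⟩
  have hXb : X \ {b} = insert a (X \ {a, b}) := by
    ext y
    simp only [mem_diff, mem_insert_iff, mem_singleton_iff, not_or]
    constructor
    · rintro ⟨hy, hyb⟩
      by_cases h : y = a
      · exact Or.inl h
      · exact Or.inr ⟨hy, h, hyb⟩
    · rintro (rfl | ⟨hy, -, hyb⟩)
      · exact ⟨ha, hab⟩
      · exact ⟨hy, hyb⟩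
  have hd1 : x ∈ M.closure (insert a (X \ {a, b})) \ M.closure (X \ {a, b}) :=
    ⟨by rwa [← hXb], hxclY⟩
  have hd2 : x ∈ M.closure (insert b (X \ {a, b})) \ M.closure (X \ {a, b}) :=
    ⟨by rwa [← hXa], hxclY⟩
  have ha' : a ∈ M.closure (insert x (X \ {a, b})) := (Matroid.closure_exchange hd1).1
  have hb' : b ∈ M.closure (insert x (X \ {a, b})) := (Matroid.closure_exchange hd2).1
  have hXsub : X ⊆ M.closure (insert x (X \ {a, b})) := by
    intro y hy
    by_cases hya : y = a
    · exact hya ▸ ha'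
    by_cases hyb : y = b
    · exact hyb ▸ hb'
    exact M.subset_closure (insert x (X \ {a, b})) (insert_subset hxE hYE)
      (mem_insert_of_mem _ ⟨hy, by simp [hya, hyb]⟩)
  have hsp : M.Spanning (insert x (X \ {a, b})) := by
    rw [Matroid.spanning_iff_closure_eq (insert_subset hxE hYE)]
    refine subset_antisymm (M.closure_subset_ground _) ?_
    rw [← hX.closure_eq]
    exact M.closure_subset_closure_of_subset_closure hXsub
  obtain ⟨B, hB, hBsub⟩ := hsp.exists_isBase_subset
  have hBcard : B.ncard = r := by rw [hB.ncard_eq_ncard_of_isBase hX, hXr]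
  have hle := ncard_le_ncard hBsub (hfin.subset (insert_subset hxE hYE))
  rw [hBcard, ncard_insert_of_notMem hxY hYfin, hYcard] at hle
  omega

lemma base_of_indep_ncard (M : Matroid α) (hfin : M.E.Finite) {r : ℕ} {X I : Set α}
    (hX : M.IsBase X) (hXr : X.ncard = r) (hI : M.Indep I) (hIr : I.ncard = r) : M.IsBase I := by
  obtain ⟨B, hB, hIB⟩ := hI.exists_isBase_superset
  have hBfin : B.Finite := hfin.subset hB.subset_ground
  have hIBeq : I = B := eq_of_subset_of_ncard_le hIB
    (by rw [hB.ncard_eq_ncard_of_isBase hX, hXr, hIr]) hBfin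
  rwa [hIBeq]

lemma exch_step (M : Matroid α) (hfin : M.E.Finite) (r : ℕ)
    (hpaving : ∀ I ⊆ M.E, I.ncard + 1 ≤ r → M.Indep I)
    {B₁ X₁ X₂ : Set α} (hB₁ : M.IsBase B₁)
    (hX₁ : M.IsBase X₁) (hX₂ : M.IsBase X₂) (hdisj : X₁ ∩ X₂ = ∅)
    (hcupB : B₁ ⊆ X₁ ∪ X₂) (hX₁r : X₁.ncard = r)
    (hm : 3 ≤ (X₁ \ B₁).ncard) :
    ∃ e ∈ X₁ \ B₁, ∃ f ∈ B₁ \ X₁,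
      M.IsBase (insert f (X₁ \ {e})) ∧ M.IsBase ((insert e X₂) \ {f}) := by
  have hX₁fin : X₁.Finite := hfin.subset hX₁.subset_ground
  have hX₂fin : X₂.Finite := hfin.subset hX₂.subset_ground
  have hd : ∀ y, y ∈ X₁ → y ∉ X₂ := by
    intro y h1 h2
    have : y ∈ X₁ ∩ X₂ := ⟨h1, h2⟩
    rw [hdisj] at this
    exact this
  have hS₂sub : B₁ \ X₁ ⊆ X₂ := fun y hy => (hcupB hy.1).resolve_left hy.2
  have hS₂fin : (B₁ \ X₁).Finite := hX₂fin.subset hS₂sub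
  have hS₂card : (B₁ \ X₁).ncard = (X₁ \ B₁).ncard := hB₁.ncard_diff_comm hX₁
  have hX₂r : X₂.ncard = r := by rw [hX₂.ncard_eq_ncard_of_isBase hX₁, hX₁r]
  obtain ⟨f₁, f₂, hf₁, hf₂, hf12⟩ := (one_lt_ncard_iff hS₂fin).1 (by omega)
  have hf₁E : f₁ ∈ M.E := hB₁.subset_ground hf₁.1
  have hf₂E : f₂ ∈ M.E := hB₁.subset_ground hf₂.1
  -- the "bad" sets for f₁ and f₂ on the X₁-side are subsingletons
  set E₁ : Set α := {e | e ∈ X₁ \ B₁ ∧ f₁ ∈ M.closure (X₁ \ {e})} with hE₁def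
  set E₂ : Set α := {e | e ∈ X₁ \ B₁ ∧ f₂ ∈ M.closure (X₁ \ {e})} with hE₂def
  have hE₁ : E₁.Subsingleton := by
    intro u hu v hv
    by_contra hne
    exact key_unique M hfin r hpaving hX₁ hX₁r hf₁E hf₁.2 hu.1.1 hv.1.1 hne hu.2 hv.2
  have hE₂ : E₂.Subsingleton := by
    intro u hu v hv
    by_contra hne
    exact key_unique M hfin r hpaving hX₁ hX₁r hf₂E hf₂.2 hu.1.1 hv.1.1 hne hu.2 hv.2
  have hE₁c : E₁.ncard ≤ 1 := by
    rcases E₁.eq_empty_or_nonempty with h | ⟨u, hu⟩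
    · simp [h]
    · rw [hE₁.eq_singleton_of_mem hu, ncard_singleton]
  have hE₂c : E₂.ncard ≤ 1 := by
    rcases E₂.eq_empty_or_nonempty with h | ⟨u, hu⟩
    · simp [h]
    · rw [hE₂.eq_singleton_of_mem hu, ncard_singleton]
  have hEU : (E₁ ∪ E₂).ncard ≤ 2 := le_trans (ncard_union_le _ _) (by omega)
  have hss : ¬ (X₁ \ B₁ ⊆ E₁ ∪ E₂) := by
    intro hsub
    have hEUfin : (E₁ ∪ E₂).Finite := by
      apply Set.Finite.union <;> exact hX₁fin.subset (fun u hu => hu.1.1)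
    have := ncard_le_ncard hsub hEUfin
    omega
  obtain ⟨e, he, heE⟩ := not_subset.1 hss
  have heX₁ : e ∈ X₁ := he.1
  have heE' : e ∈ M.E := hX₁.subset_ground heX₁
  have heX₂ : e ∉ X₂ := hd e heX₁
  have hef₁ : f₁ ∉ M.closure (X₁ \ {e}) := fun h => heE (mem_union_left _ ⟨he, h⟩)
  have hef₂ : f₂ ∉ M.closure (X₁ \ {e}) := fun h => heE (mem_union_right _ ⟨he, h⟩)
  -- choose f among f₁, f₂ with e ∉ cl (X₂ \ {f})
  have hchoose : ∃ f, f ∈ B₁ \ X₁ ∧ f ∉ M.closure (X₁ \ {e}) ∧ e ∉ M.closure (X₂ \ {f}) := by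
    by_cases hc : e ∈ M.closure (X₂ \ {f₁})
    · refine ⟨f₂, hf₂, hef₂, fun h => ?_⟩
      exact key_unique M hfin r hpaving hX₂ hX₂r heE' heX₂ (hS₂sub hf₁) (hS₂sub hf₂) hf12 hc h
    · exact ⟨f₁, hf₁, hef₁, hc⟩
  obtain ⟨f, hf, hfc1, hfc2⟩ := hchoose
  have hfE : f ∈ M.E := hB₁.subset_ground hf.1
  have hfX₂ : f ∈ X₂ := hS₂sub hf
  have hef : e ≠ f := fun h => hf.2 (h ▸ heX₁)
  have hr3 : 3 ≤ r := by
    have := ncard_le_ncard (diff_subset : X₁ \ B₁ ⊆ X₁) hX₁fin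
    omega
  -- first base
  have hfnot : f ∉ X₁ \ {e} := fun h => hf.2 h.1
  have hP : M.Indep (insert f (X₁ \ {e})) :=
    ((hX₁.indep.subset diff_subset).insert_indep_iff_of_notMem hfnot).2 ⟨hfE, hfc1⟩
  have hPcard : (insert f (X₁ \ {e})).ncard = r := by
    rw [ncard_insert_of_notMem hfnot (hX₁fin.subset diff_subset),
      ncard_diff_singleton_of_mem heX₁, hX₁r]
    omega
  have hPbase : M.IsBase (insert f (X₁ \ {e})) :=
    base_of_indep_ncard M hfin hX₁ hX₁r hP hPcard
  -- second base
  have henot : e ∉ X₂ \ {f} := fun h => heX₂ h.1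
  have hQ : M.Indep (insert e (X₂ \ {f})) :=
    ((hX₂.indep.subset diff_subset).insert_indep_iff_of_notMem henot).2 ⟨heE', hfc2⟩
  have hQcard : (insert e (X₂ \ {f})).ncard = r := by
    rw [ncard_insert_of_notMem henot (hX₂fin.subset diff_subset),
      ncard_diff_singleton_of_mem hfX₂, hX₂r]
    omega
  have hQbase : M.IsBase (insert e (X₂ \ {f})) :=
    base_of_indep_ncard M hfin hX₁ hX₁r hQ hQcard
  refine ⟨e, he, f, hf, hPbase, ?_⟩
  rwa [← insert_diff_singleton_comm hef] 

lemma aux_seq (M : Matroid α) (hfin : M.E.Finite) (r : ℕ)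
    (hpaving : ∀ I ⊆ M.E, I.ncard + 1 ≤ r → M.Indep I)
    {B₁ B₂ : Set α} (hB₁ : M.IsBase B₁) :
    ∀ m : ℕ, ∀ X₁ X₂ : Set α, M.IsBase X₁ → M.IsBase X₂ → X₁ ∩ X₂ = ∅ →
      X₁ ∪ X₂ = B₁ ∪ B₂ → X₁.ncard = r → (X₁ \ B₁).ncard = m →
      ∃ p : ℕ → Set α × Set α, p 0 = (X₁, X₂) ∧
        ∀ j < m - 2, SymExch M (p j) (p (j + 1)) ∧
          ((p (j + 1)).1 \ B₁).ncard < ((p j).1 \ B₁).ncard := by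
  intro m
  induction m with
  | zero =>
    intro X₁ X₂ _ _ _ _ _ _
    exact ⟨fun _ => (X₁, X₂), rfl, fun j hj => absurd hj (by omega)⟩
  | succ m ih =>
    intro X₁ X₂ hX₁ hX₂ hdisj hcup hX₁r hmcard
    by_cases hm2 : m + 1 ≤ 2
    · exact ⟨fun _ => (X₁, X₂), rfl, fun j hj => absurd hj (by omega)⟩
    have hcupB : B₁ ⊆ X₁ ∪ X₂ := hcup ▸ subset_union_left
    obtain ⟨e, he, f, hf, hPb, hQb⟩ :=
      exch_step M hfin r hpaving hB₁ hX₁ hX₂ hdisj hcupB hX₁r (by omega)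
    have hX₁fin : X₁.Finite := hfin.subset hX₁.subset_ground
    have hd : ∀ y, y ∈ X₁ → y ∉ X₂ := by
      intro y h1 h2
      have : y ∈ X₁ ∩ X₂ := ⟨h1, h2⟩
      rw [hdisj] at this
      exact this
    have hfX₂ : f ∈ X₂ := (hcupB hf.1).resolve_left hf.2
    have hef : e ≠ f := fun h => hf.2 (h ▸ he.1)
    have hdisj' : insert f (X₁ \ {e}) ∩ ((insert e X₂) \ {f}) = ∅ := by
      apply eq_empty_iff_forall_notMem.2
      rintro y ⟨hy1, hy2, hyf⟩
      rcases mem_insert_iff.1 hy1 with rfl | ⟨hyX, hye⟩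
      · exact hyf rfl
      · rcases mem_insert_iff.1 hy2 with rfl | hyX₂
        · exact hye rfl
        · exact hd y hyX hyX₂
    have hcup' : insert f (X₁ \ {e}) ∪ ((insert e X₂) \ {f}) = B₁ ∪ B₂ := by
      rw [← hcup]
      ext y
      simp only [mem_union, mem_insert_iff, mem_diff, mem_singleton_iff]
      constructor
      · rintro ((rfl | ⟨h, -⟩) | ⟨(rfl | h), -⟩)
        · exact Or.inr hfX₂
        · exact Or.inl h
        · exact Or.inl he.1
        · exact Or.inr h
      · rintro (h | h)
        · by_cases hye : y = e
          · subst hye; exact Or.inr ⟨Or.inl rfl, hef⟩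
          · exact Or.inl (Or.inr ⟨h, hye⟩)
        · by_cases hyf : y = f
          · exact Or.inl (Or.inl hyf)
          · exact Or.inr ⟨Or.inr h, hyf⟩
    have hle : (X₁ \ B₁).ncard ≤ X₁.ncard := ncard_le_ncard diff_subset hX₁fin
    have hfnot : f ∉ X₁ \ {e} := fun h => hf.2 h.1
    have hX₁'r : (insert f (X₁ \ {e})).ncard = r := by
      rw [ncard_insert_of_notMem hfnot (hX₁fin.subset diff_subset),
        ncard_diff_singleton_of_mem he.1, hX₁r]
      omega
    have hX₁'B : insert f (X₁ \ {e}) \ B₁ = (X₁ \ B₁) \ {e} := by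
      ext y
      simp only [mem_diff, mem_insert_iff, mem_singleton_iff]
      constructor
      · rintro ⟨rfl | ⟨hyX, hye⟩, hyB⟩
        · exact absurd hf.1 hyB
        · exact ⟨⟨hyX, hyB⟩, hye⟩
      · rintro ⟨⟨hyX, hyB⟩, hye⟩
        exact ⟨Or.inr ⟨hyX, hye⟩, hyB⟩
    have hmcard' : ((insert f (X₁ \ {e})) \ B₁).ncard = m := by
      rw [hX₁'B, ncard_diff_singleton_of_mem he, hmcard]
      omega
    obtain ⟨p', hp0, hstep⟩ := ih (insert f (X₁ \ {e})) ((insert e X₂) \ {f})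
      hPb hQb hdisj' hcup' hX₁'r hmcard'
    refine ⟨fun j => match j with | 0 => (X₁, X₂) | (k + 1) => p' k, rfl, ?_⟩
    intro j hj
    cases j with
    | zero =>
      constructor
      · show SymExch M (X₁, X₂) (p' 0)
        rw [hp0]
        exact ⟨e, ⟨he.1, hd e he.1⟩, f, ⟨hfX₂, hf.2⟩, rfl, rfl, hPb, hQb⟩
      · show ((p' 0).1 \ B₁).ncard < ((X₁, X₂).1 \ B₁).ncard
        rw [hp0]
        show ((insert f (X₁ \ {e})) \ B₁).ncard < (X₁ \ B₁).ncard
        rw [hmcard', hmcard]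
        omega
    | succ k =>
      exact hstep k (by omega)

end PavingAux

/-- Compatible basis pairs of a rank-`r` paving matroid with `A₁ ∩ A₂ = ∅` admit a strictly
monotone sequence of symmetric exchanges of length at least `r - |A₁ ∩ B₁| - 2`. -/
theorem paving_monotone_sequence {α : Type*} (M : Matroid α) (hfin : M.E.Finite) (r : ℕ)
    (hpaving : ∀ I ⊆ M.E, I.ncard + 1 ≤ r → M.Indep I)
    (A₁ A₂ B₁ B₂ : Set α)
    (hA₁ : M.IsBase A₁) (hA₂ : M.IsBase A₂) (hB₁ : M.IsBase B₁) (hB₂ : M.IsBase B₂)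
    (hr : A₁.ncard = r) (hdisj : A₁ ∩ A₂ = ∅)
    (hcap : A₁ ∩ A₂ = B₁ ∩ B₂) (hcup : A₁ ∪ A₂ = B₁ ∪ B₂) :
    ∃ n : ℕ, r - (A₁ ∩ B₁).ncard - 2 ≤ n ∧ ∃ p : ℕ → Set α × Set α, p 0 = (A₁, A₂) ∧
      ∀ j < n, SymExch M (p j) (p (j + 1)) ∧
        ((p (j + 1)).1 \ B₁).ncard < ((p j).1 \ B₁).ncard := by
  obtain ⟨p, hp0, hstep⟩ := PavingAux.aux_seq M hfin r hpaving hB₁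
    ((A₁ \ B₁).ncard) A₁ A₂ hA₁ hA₂ hdisj hcup hr rfl
  refine ⟨(A₁ \ B₁).ncard - 2, ?_, p, hp0, hstep⟩
  have h1 := ncard_inter_add_ncard_diff_eq_ncard A₁ B₁ (hfin.subset hA₁.subset_ground)
  omega
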